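/- Let (S,R) be an argumentation network, V₀ : S → [0,1] an initial assignment, and (V_i) the Gabbay-Rodrigues iteration sequence from V₀; suppose that for every Z ∈ S the sequence V_i(Z) converges to a limit V_e(Z). Let λ : S → {in, out, und} be a legal labelling. Take any X ∈ S. If V_e and λ agree on the values of all nodes in Att(X), then V_e and λ agree on the value of X. -/

import Mathlib

open Filter Topology

variable {S : Type*}

/-- Maximum of `V` over the attackers of `X` (i.e. `{Y | R Y X}`),
with the convention that the maximum over the empty set is `0`. -/
noncomputable def attMax [Fintype S] (R : S → S → Prop) [DecidableRel R] (V : S → ℝ) (X : S) : ℝ :=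
  (Finset.univ.filter (fun Y => R Y X)).fold max 0 V

/-- One step of the Gabbay-Rodrigues iteration. -/
noncomputable def grStep [Fintype S] (R : S → S → Prop) [DecidableRel R] (V : S → ℝ) (X : S) : ℝ :=
  (1 - V X) * min (1/2) (1 - attMax R V X) + V X * max (1/2) (1 - attMax R V X)

/-- The Gabbay-Rodrigues iteration sequence from the initial assignment `V0`. -/
noncomputable def grSeq [Fintype S] (R : S → S → Prop) [DecidableRel R] (V0 : S → ℝ) : ℕ → S → ℝ
  | 0 => V0
  | i + 1 => grStep R (grSeq R V0 i)

def inSet (V : S → ℝ) : Set S := {X | V X = 1}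

def outSet (V : S → ℝ) : Set S := {X | V X = 0}

def conflictFree (R : S → S → Prop) (E : Set S) : Prop := ∀ X ∈ E, ∀ Y ∈ E, ¬ R X Y

def acceptable (R : S → S → Prop) (E : Set S) (X : S) : Prop := ∀ Y, R Y X → ∃ Z ∈ E, R Z Y

def admissible (R : S → S → Prop) (E : Set S) : Prop :=
  conflictFree R E ∧ ∀ X ∈ E, acceptable R E X

def completeExt (R : S → S → Prop) (E : Set S) : Prop :=
  admissible R E ∧ ∀ X, acceptable R E X → X ∈ E

/-- `E⁺` : the set of arguments attacked by `E`. -/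
def plusSet (R : S → S → Prop) (E : Set S) : Set S := {X | ∃ Y ∈ E, R Y X}

/-- The GR sequence is stable at iteration `k` if every node with a crisp value at
iteration `k` keeps that value at iteration `k+1`. -/
def grStable [Fintype S] (R : S → S → Prop) [DecidableRel R] (V0 : S → ℝ) (k : ℕ) : Prop :=
  ∀ X : S, (grSeq R V0 k X = 0 ∨ grSeq R V0 k X = 1) → grSeq R V0 (k + 1) X = grSeq R V0 k X

inductive Lab : Type
  | inn : Lab
  | out : Lab
  | und : Lab

/-- A labelling `lam` is legal. -/
def legalLab (R : S → S → Prop) (lam : S → Lab) : Prop :=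
  ∀ X : S,
    (lam X = Lab.inn → ∀ Y, R Y X → lam Y = Lab.out) ∧
    (lam X = Lab.out → ∃ Y, R Y X ∧ lam Y = Lab.inn) ∧
    (lam X = Lab.und →
      (∀ Y, R Y X → lam Y ≠ Lab.inn) ∧ (∃ Y, R Y X ∧ lam Y ≠ Lab.out))

/-- An assignment `V` and a labelling `lam` agree on the value of the node `X`. -/
def agreesAt (V : S → ℝ) (lam : S → Lab) (X : S) : Prop :=
  (V X = 1 ↔ lam X = Lab.inn) ∧ (V X = 0 ↔ lam X = Lab.out) ∧
  (V X = 1/2 ↔ lam X = Lab.und)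

private lemma tendsto_fold_max (s : Finset S) (f : ℕ → S → ℝ) (g : S → ℝ)
    (h : ∀ Z, Filter.Tendsto (fun i => f i Z) Filter.atTop (nhds (g Z))) :
    Filter.Tendsto (fun i => s.fold max 0 (f i)) Filter.atTop (nhds (s.fold max 0 g)) := by
  classical
  induction s using Finset.induction with
  | empty => simpa using tendsto_const_nhds
  | insert x s hx ih =>
      simp only [Finset.fold_insert hx]
      exact (h _).max ih

private lemma gr_fixed [Fintype S] (R : S → S → Prop) [DecidableRel R]
    (V0 : S → ℝ) (Ve : S → ℝ)
    (hconv : ∀ Z : S, Filter.Tendsto (fun i => grSeq R V0 i Z) Filter.atTop (nhds (Ve Z)))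
    (X : S) : Ve X = grStep R Ve X := by
  have hA : Filter.Tendsto (fun i => attMax R (grSeq R V0 i) X) Filter.atTop
      (nhds (attMax R Ve X)) :=
    tendsto_fold_max _ _ _ hconv
  have h2 : Filter.Tendsto (fun i => grSeq R V0 (i+1) X) Filter.atTop
      (nhds (grStep R Ve X)) := by
    simp only [grSeq, grStep]
    exact (((tendsto_const_nhds.sub (hconv X)).mul
      (tendsto_const_nhds.min (tendsto_const_nhds.sub hA)))).add
      ((hconv X).mul (tendsto_const_nhds.max (tendsto_const_nhds.sub hA)))
  have h1 : Filter.Tendsto (fun i => grSeq R V0 (i+1) X) Filter.atTop (nhds (Ve X)) :=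
    (hconv X).comp (Filter.tendsto_add_atTop_nat 1)
  exact tendsto_nhds_unique h1 h2

private lemma gr_bounds [Fintype S] (R : S → S → Prop) [DecidableRel R]
    (V0 : S → ℝ) (hV0 : ∀ X, V0 X ∈ Set.Icc (0:ℝ) 1) :
    ∀ i Z, grSeq R V0 i Z ∈ Set.Icc (0:ℝ) 1 := by
  intro i
  induction i with
  | zero => exact hV0
  | succ n ih =>
      intro Z
      have hM0 : (0:ℝ) ≤ attMax R (grSeq R V0 n) Z := by
        unfold attMax; exact (Finset.le_fold_max _).2 (Or.inl le_rfl)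
      have hM1 : attMax R (grSeq R V0 n) Z ≤ 1 := by
        unfold attMax; exact (Finset.fold_max_le _).2 ⟨zero_le_one, fun x _ => (ih x).2⟩
      have hZ := ih Z
      simp only [grSeq, grStep]
      constructor
      · have ha : (0:ℝ) ≤ min (1/2) (1 - attMax R (grSeq R V0 n) Z) :=
          le_min (by norm_num) (by linarith)
        have hb : (0:ℝ) ≤ max (1/2) (1 - attMax R (grSeq R V0 n) Z) :=
          le_max_of_le_left (by norm_num)
        have h1 := mul_nonneg (sub_nonneg.2 hZ.2) ha
        have h2 := mul_nonneg hZ.1 hb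
        linarith
      · have ha : min (1/2) (1 - attMax R (grSeq R V0 n) Z) ≤ 1 :=
          min_le_of_left_le (by norm_num)
        have hb : max (1/2) (1 - attMax R (grSeq R V0 n) Z) ≤ 1 :=
          max_le (by norm_num) (by linarith)
        nlinarith [hZ.1, hZ.2]

theorem stmt17 [Fintype S] [Nonempty S] (R : S → S → Prop) [DecidableRel R]
    (V0 : S → ℝ) (hV0 : ∀ X, V0 X ∈ Set.Icc (0:ℝ) 1)
    (Ve : S → ℝ)
    (hconv : ∀ Z : S, Tendsto (fun i => grSeq R V0 i Z) atTop (nhds (Ve Z)))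
    (lam : S → Lab) (hlam : legalLab R lam)
    (X : S) (hagree : ∀ Y, R Y X → agreesAt Ve lam Y) :
    agreesAt Ve lam X := by
  classical
  have hVe : ∀ Z, Ve Z ∈ Set.Icc (0:ℝ) 1 := fun Z =>
    ⟨ge_of_tendsto (hconv Z) (Filter.Eventually.of_forall fun i => (gr_bounds R V0 hV0 i Z).1),
     le_of_tendsto (hconv Z) (Filter.Eventually.of_forall fun i => (gr_bounds R V0 hV0 i Z).2)⟩
  have hfix := gr_fixed R V0 Ve hconv X
  have hmem : ∀ Y, Y ∈ Finset.univ.filter (fun Y => R Y X) ↔ R Y X := by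
    intro Y; simp
  cases hl : lam X with
  | inn =>
      have hout : ∀ Y, R Y X → Ve Y = 0 := fun Y hY =>
        (hagree Y hY).2.1.2 ((hlam X).1 hl Y hY)
      have hM : attMax R Ve X = 0 := by
        refine le_antisymm ?_ ((Finset.le_fold_max _).2 (Or.inl le_rfl))
        exact (Finset.fold_max_le _).2 ⟨le_rfl, fun Y hY => le_of_eq (hout Y ((hmem Y).1 hY))⟩
      rw [grStep, hM] at hfix
      norm_num at hfix
      have hX1 : Ve X = 1 := by linarith
      rw [agreesAt, hX1, hl]
      norm_num
      exact ⟨fun h => Lab.noConfusion h, fun h => Lab.noConfusion h⟩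
  | out =>
      obtain ⟨Y, hYX, hYin⟩ := (hlam X).2.1 hl
      have hY1 : Ve Y = 1 := (hagree Y hYX).1.2 hYin
      have hM : attMax R Ve X = 1 := by
        refine le_antisymm ((Finset.fold_max_le _).2 ⟨zero_le_one, fun Z _ => (hVe Z).2⟩) ?_
        exact (Finset.le_fold_max _).2 (Or.inr ⟨Y, (hmem Y).2 hYX, le_of_eq hY1.symm⟩)
      rw [grStep, hM] at hfix
      norm_num at hfix
      have hX0 : Ve X = 0 := by linarith
      rw [agreesAt, hX0, hl]
      norm_num
      exact ⟨fun h => Lab.noConfusion h, fun h => Lab.noConfusion h⟩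
  | und =>
      obtain ⟨hnin, Y, hYX, hYno⟩ := (hlam X).2.2 hl
      have hYu : lam Y = Lab.und := by
        cases h : lam Y with
        | inn => exact absurd h (hnin Y hYX)
        | out => exact absurd h hYno
        | und => rfl
      have hYh : Ve Y = 1/2 := (hagree Y hYX).2.2.2 hYu
      have hM : attMax R Ve X = 1/2 := by
        refine le_antisymm ?_ ((Finset.le_fold_max _).2
          (Or.inr ⟨Y, (hmem Y).2 hYX, le_of_eq hYh.symm⟩))
        refine (Finset.fold_max_le _).2 ⟨by norm_num, fun Z hZ => ?_⟩
        have hZX := (hmem Z).1 hZ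
        cases h : lam Z with
        | inn => exact absurd h (hnin Z hZX)
        | out => rw [(hagree Z hZX).2.1.2 h]; norm_num
        | und => rw [(hagree Z hZX).2.2.2 h]
      rw [grStep, hM] at hfix
      norm_num at hfix
      have hXh : Ve X = 1/2 := by linarith
      rw [agreesAt, hXh, hl]
      norm_num
      exact ⟨fun h => Lab.noConfusion h, fun h => Lab.noConfusion h⟩
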